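/- No formula in the ◆-free fragment has the same value as ◆p at w₀ in the model of Theorem 3, and no formula in the ■-free fragment has the same value as ■p at w₀; hence ■ and ◆ are not interdefinable in G²±. -/

import Mathlib

open unitInterval

instance : Fact ((0:ℝ) ≤ 1) := ⟨zero_le_one⟩

/-- Gödel implication on [0,1]. -/
noncomputable def gimp (a b : I) : I := if a ≤ b then 1 else b

/-- Gödel coimplication on [0,1]. -/
noncomputable def gcoimp (a b : I) : I := if a ≤ b then 0 else a

/-- The language of G²± with ¬, ∧, →, ■, ◆. -/
inductive Fm : Type
  | var : ℕ → Fm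
  | neg : Fm → Fm
  | and : Fm → Fm → Fm
  | imp : Fm → Fm → Fm
  | box : Fm → Fm
  | dia : Fm → Fm

/-- A bi-relational G²± model. -/
structure Mdl where
  W : Type
  Rp : W → W → I
  Rm : W → W → I
  v1 : ℕ → W → I
  v2 : ℕ → W → I

/-- The pair (positive support, negative support) of a formula at a state. -/
noncomputable def Mdl.val (M : Mdl) : Fm → M.W → I × I
  | .var n, w => (M.v1 n w, M.v2 n w)
  | .neg φ, w => ((M.val φ w).2, (M.val φ w).1)
  | .and φ ψ, w => ((M.val φ w).1 ⊓ (M.val ψ w).1, (M.val φ w).2 ⊔ (M.val ψ w).2)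
  | .imp φ ψ, w => (gimp (M.val φ w).1 (M.val ψ w).1, gcoimp (M.val ψ w).2 (M.val φ w).2)
  | .box φ, w => (⨅ w', gimp (M.Rp w w') (M.val φ w').1, ⨅ w', gimp (M.Rm w w') (M.val φ w').2)
  | .dia φ, w => (⨆ w', (M.Rp w w') ⊓ (M.val φ w').1, ⨆ w', (M.Rm w w') ⊓ (M.val φ w').2)

noncomputable def Mdl.val1 (M : Mdl) (φ : Fm) (w : M.W) : I := (M.val φ w).1
noncomputable def Mdl.val2 (M : Mdl) (φ : Fm) (w : M.W) : I := (M.val φ w).2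

/-- The crisp relation of the model of Theorem 3: w₀ sees w₁ and w₂. -/
noncomputable def thmR : Fin 3 → Fin 3 → I :=
  fun w w' => if w = 0 ∧ (w' = 1 ∨ w' = 2) then 1 else 0

/-- The model of Theorem 3: all variables valued (1,0) at w₀, (2/3,1/2) at w₁,
(1/3,1/4) at w₂; both relations equal to `thmR`. -/
noncomputable abbrev thmModel : Mdl where
  W := Fin 3
  Rp := thmR
  Rm := thmR
  v1 := fun _ w =>
    if w = 1 then ⟨2/3, by norm_num [Set.mem_Icc]⟩
    else if w = 2 then ⟨1/3, by norm_num [Set.mem_Icc]⟩ else 1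
  v2 := fun _ w =>
    if w = 1 then ⟨1/2, by norm_num [Set.mem_Icc]⟩
    else if w = 2 then ⟨1/4, by norm_num [Set.mem_Icc]⟩ else 0

/-- ◆-freeness of a formula. -/
def Fm.diaFree : Fm → Prop
  | .var _ => True
  | .neg φ => φ.diaFree
  | .and φ ψ => φ.diaFree ∧ ψ.diaFree
  | .imp φ ψ => φ.diaFree ∧ ψ.diaFree
  | .box φ => φ.diaFree
  | .dia _ => False

/-- ■-freeness of a formula. -/
def Fm.boxFree : Fm → Prop
  | .var _ => True
  | .neg φ => φ.boxFree
  | .and φ ψ => φ.boxFree ∧ ψ.boxFree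
  | .imp φ ψ => φ.boxFree ∧ ψ.boxFree
  | .box _ => False
  | .dia φ => φ.boxFree


namespace BoxDiaAux

noncomputable def q14 : I := ⟨1/4, by norm_num [Set.mem_Icc]⟩
noncomputable def q13 : I := ⟨1/3, by norm_num [Set.mem_Icc]⟩
noncomputable def q12 : I := ⟨1/2, by norm_num [Set.mem_Icc]⟩
noncomputable def q23 : I := ⟨2/3, by norm_num [Set.mem_Icc]⟩

/-- The pairing of values at `w₁` and `w₂`. -/
def P (x y : I) : Prop :=
  (x = 0 ∧ y = 0) ∨ (x = q12 ∧ y = q14) ∨ (x = q23 ∧ y = q13) ∨ (x = 1 ∧ y = 1)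

/-- Possible values at `w₀` of ◆-free formulas (componentwise). -/
def A (a : I) : Prop := a = 0 ∨ a = q14 ∨ a = q13 ∨ a = 1

/-- Possible values at `w₀` of ■-free formulas (componentwise). -/
def B (a : I) : Prop := a = 0 ∨ a = q12 ∨ a = q23 ∨ a = 1

section PClosure

set_option maxHeartbeats 1000000

lemma P_gimp {x y x' y'} (h : P x y) (h' : P x' y') : P (gimp x x') (gimp y y') := by
  rcases h with ⟨hx,hy⟩|⟨hx,hy⟩|⟨hx,hy⟩|⟨hx,hy⟩ <;>
  rcases h' with ⟨hx',hy'⟩|⟨hx',hy'⟩|⟨hx',hy'⟩|⟨hx',hy'⟩ <;>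
  subst hx hy hx' hy' <;>
  norm_num [P, gimp, q14, q13, q12, q23, Subtype.ext_iff, ← Subtype.coe_le_coe]

lemma P_gcoimp {x y x' y'} (h : P x y) (h' : P x' y') : P (gcoimp x x') (gcoimp y y') := by
  rcases h with ⟨hx,hy⟩|⟨hx,hy⟩|⟨hx,hy⟩|⟨hx,hy⟩ <;>
  rcases h' with ⟨hx',hy'⟩|⟨hx',hy'⟩|⟨hx',hy'⟩|⟨hx',hy'⟩ <;>
  subst hx hy hx' hy' <;>
  norm_num [P, gcoimp, q14, q13, q12, q23, Subtype.ext_iff, ← Subtype.coe_le_coe]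

lemma P_inf {x y x' y'} (h : P x y) (h' : P x' y') : P (x ⊓ x') (y ⊓ y') := by
  rcases h with ⟨hx,hy⟩|⟨hx,hy⟩|⟨hx,hy⟩|⟨hx,hy⟩ <;>
  rcases h' with ⟨hx',hy'⟩|⟨hx',hy'⟩|⟨hx',hy'⟩|⟨hx',hy'⟩ <;>
  subst hx hy hx' hy' <;>
  norm_num [P, min_def, q14, q13, q12, q23, Subtype.ext_iff,
    ← Subtype.coe_le_coe]

lemma P_sup {x y x' y'} (h : P x y) (h' : P x' y') : P (x ⊔ x') (y ⊔ y') := by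
  rcases h with ⟨hx,hy⟩|⟨hx,hy⟩|⟨hx,hy⟩|⟨hx,hy⟩ <;>
  rcases h' with ⟨hx',hy'⟩|⟨hx',hy'⟩|⟨hx',hy'⟩|⟨hx',hy'⟩ <;>
  subst hx hy hx' hy' <;>
  norm_num [P, max_def, q14, q13, q12, q23, Subtype.ext_iff,
    ← Subtype.coe_le_coe]

end PClosure

lemma P_le {x y} (h : P x y) : y ≤ x := by
  rcases h with ⟨hx,hy⟩|⟨hx,hy⟩|⟨hx,hy⟩|⟨hx,hy⟩ <;> subst hx hy <;>
  norm_num [q14, q13, q12, q23, ← Subtype.coe_le_coe]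

lemma P_sndA {x y} (h : P x y) : A y := by
  rcases h with ⟨_,hy⟩|⟨_,hy⟩|⟨_,hy⟩|⟨_,hy⟩ <;> subst hy <;> simp [A]

lemma P_fstB {x y} (h : P x y) : B x := by
  rcases h with ⟨hx,_⟩|⟨hx,_⟩|⟨hx,_⟩|⟨hx,_⟩ <;> subst hx <;> simp [B]

lemma S_gimp {S : I → Prop} (h0 : S 0) (h1 : S 1) {a b : I} (hb : S b) :
    S (gimp a b) := by
  unfold gimp; split_ifs; exacts [h1, hb]

lemma S_gcoimp {S : I → Prop} (h0 : S 0) (h1 : S 1) {a b : I} (ha : S a) :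
    S (gcoimp a b) := by
  unfold gcoimp; split_ifs; exacts [h0, ha]

lemma S_inf {S : I → Prop} {a b : I} (ha : S a) (hb : S b) : S (a ⊓ b) := by
  rcases le_total a b with h | h
  · rwa [inf_eq_left.mpr h]
  · rwa [inf_eq_right.mpr h]

lemma S_sup {S : I → Prop} {a b : I} (ha : S a) (hb : S b) : S (a ⊔ b) := by
  rcases le_total a b with h | h
  · rwa [sup_eq_right.mpr h]
  · rwa [sup_eq_left.mpr h]

lemma gimp_zero (a : I) : gimp 0 a = 1 := if_pos nonneg'
lemma gimp_one (a : I) : gimp 1 a = a := by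
  unfold gimp; split_ifs with h
  · exact le_antisymm h le_one'
  · rfl
lemma one_inf (a : I) : (1 : I) ⊓ a = a := inf_eq_right.mpr le_one'
lemma zero_inf (a : I) : (0 : I) ⊓ a = 0 := inf_eq_left.mpr nonneg'
lemma zero_sup (a : I) : (0 : I) ⊔ a = a := sup_eq_right.mpr nonneg'

lemma inf3 (f : Fin 3 → I) : (⨅ w, f w) = f 0 ⊓ (f 1 ⊓ f 2) := by
  refine le_antisymm (le_inf (iInf_le f 0) (le_inf (iInf_le f 1) (iInf_le f 2)))
    (le_iInf fun w => ?_)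
  fin_cases w
  exacts [inf_le_left, le_trans inf_le_right inf_le_left,
    le_trans inf_le_right inf_le_right]

lemma sup3 (f : Fin 3 → I) : (⨆ w, f w) = f 0 ⊔ (f 1 ⊔ f 2) := by
  refine le_antisymm (iSup_le fun w => ?_)
    (sup_le (le_iSup f 0) (sup_le (le_iSup f 1) (le_iSup f 2)))
  fin_cases w
  exacts [le_sup_left, le_trans le_sup_left le_sup_right,
    le_trans le_sup_right le_sup_right]

lemma thmR_00 : thmR 0 0 = 0 := by norm_num [thmR, Fin.ext_iff]
lemma thmR_01 : thmR 0 1 = 1 := by norm_num [thmR, Fin.ext_iff]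
lemma thmR_02 : thmR 0 2 = 1 := by norm_num [thmR, Fin.ext_iff]
lemma thmR_1 (w : Fin 3) : thmR 1 w = 0 := by norm_num [thmR, Fin.ext_iff]
lemma thmR_2 (w : Fin 3) : thmR 2 w = 0 := by norm_num [thmR, Fin.ext_iff]

lemma val_box_zero (φ : Fm) :
    thmModel.val (.box φ) 0 =
      ((thmModel.val φ 1).1 ⊓ (thmModel.val φ 2).1,
        (thmModel.val φ 1).2 ⊓ (thmModel.val φ 2).2) := by
  show (⨅ w', gimp (thmR 0 w') (thmModel.val φ w').1,
        ⨅ w', gimp (thmR 0 w') (thmModel.val φ w').2) = _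
  rw [inf3 (fun w' => gimp (thmR 0 w') (thmModel.val φ w').1),
    inf3 (fun w' => gimp (thmR 0 w') (thmModel.val φ w').2)]
  simp only [thmR_00, thmR_01, thmR_02, gimp_zero, gimp_one, one_inf]

lemma val_box_one (φ : Fm) : thmModel.val (.box φ) 1 = (1, 1) := by
  show (⨅ w', gimp (thmR 1 w') (thmModel.val φ w').1,
        ⨅ w', gimp (thmR 1 w') (thmModel.val φ w').2) = _
  simp [thmR_1, gimp_zero]

lemma val_box_two (φ : Fm) : thmModel.val (.box φ) 2 = (1, 1) := by
  show (⨅ w', gimp (thmR 2 w') (thmModel.val φ w').1,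
        ⨅ w', gimp (thmR 2 w') (thmModel.val φ w').2) = _
  simp [thmR_2, gimp_zero]

lemma val_dia_zero (φ : Fm) :
    thmModel.val (.dia φ) 0 =
      ((thmModel.val φ 1).1 ⊔ (thmModel.val φ 2).1,
        (thmModel.val φ 1).2 ⊔ (thmModel.val φ 2).2) := by
  show (⨆ w', thmR 0 w' ⊓ (thmModel.val φ w').1,
        ⨆ w', thmR 0 w' ⊓ (thmModel.val φ w').2) = _
  rw [sup3 (fun w' => thmR 0 w' ⊓ (thmModel.val φ w').1),
    sup3 (fun w' => thmR 0 w' ⊓ (thmModel.val φ w').2)]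
  simp only [thmR_00, thmR_01, thmR_02, zero_inf, one_inf, zero_sup]

lemma val_dia_one (φ : Fm) : thmModel.val (.dia φ) 1 = (0, 0) := by
  show (⨆ w', thmR 1 w' ⊓ (thmModel.val φ w').1,
        ⨆ w', thmR 1 w' ⊓ (thmModel.val φ w').2) = _
  simp [thmR_1, zero_inf]

lemma val_dia_two (φ : Fm) : thmModel.val (.dia φ) 2 = (0, 0) := by
  show (⨆ w', thmR 2 w' ⊓ (thmModel.val φ w').1,
        ⨆ w', thmR 2 w' ⊓ (thmModel.val φ w').2) = _
  simp [thmR_2, zero_inf]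

lemma val_var (n : ℕ) : thmModel.val (.var n) 0 = (1, 0) ∧
    thmModel.val (.var n) 1 = (q23, q12) ∧ thmModel.val (.var n) 2 = (q13, q14) := by
  refine ⟨?_, ?_, ?_⟩ <;> simp [Mdl.val, q23, q12, q13, q14]

lemma inv_diaFree (χ : Fm) (h : χ.diaFree) :
    A (thmModel.val χ 0).1 ∧ A (thmModel.val χ 0).2 ∧
    P (thmModel.val χ 1).1 (thmModel.val χ 2).1 ∧
    P (thmModel.val χ 1).2 (thmModel.val χ 2).2 := by
  induction χ with
  | var n =>
      obtain ⟨h0, h1, h2⟩ := val_var n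
      rw [h0, h1, h2]
      exact ⟨Or.inr (Or.inr (Or.inr rfl)), Or.inl rfl,
        Or.inr (Or.inr (Or.inl ⟨rfl, rfl⟩)), Or.inr (Or.inl ⟨rfl, rfl⟩)⟩
  | neg φ ih =>
      obtain ⟨a1, a2, p1, p2⟩ := ih h
      exact ⟨a2, a1, p2, p1⟩
  | and φ ψ ihφ ihψ =>
      obtain ⟨a1, a2, p1, p2⟩ := ihφ h.1
      obtain ⟨b1, b2, r1, r2⟩ := ihψ h.2
      exact ⟨S_inf a1 b1, S_sup a2 b2, P_inf p1 r1, P_sup p2 r2⟩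
  | imp φ ψ ihφ ihψ =>
      obtain ⟨a1, a2, p1, p2⟩ := ihφ h.1
      obtain ⟨b1, b2, r1, r2⟩ := ihψ h.2
      exact ⟨S_gimp (Or.inl rfl) (Or.inr (Or.inr (Or.inr rfl))) b1,
        S_gcoimp (Or.inl rfl) (Or.inr (Or.inr (Or.inr rfl))) b2,
        P_gimp p1 r1, P_gcoimp r2 p2⟩
  | box φ ih =>
      obtain ⟨a1, a2, p1, p2⟩ := ih h
      rw [val_box_zero, val_box_one, val_box_two]
      refine ⟨?_, ?_, ?_, ?_⟩
      · rw [inf_eq_right.mpr (P_le p1)]; exact P_sndA p1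
      · rw [inf_eq_right.mpr (P_le p2)]; exact P_sndA p2
      · exact Or.inr (Or.inr (Or.inr ⟨rfl, rfl⟩))
      · exact Or.inr (Or.inr (Or.inr ⟨rfl, rfl⟩))
  | dia φ ih => exact absurd h id

lemma inv_boxFree (χ : Fm) (h : χ.boxFree) :
    B (thmModel.val χ 0).1 ∧ B (thmModel.val χ 0).2 ∧
    P (thmModel.val χ 1).1 (thmModel.val χ 2).1 ∧
    P (thmModel.val χ 1).2 (thmModel.val χ 2).2 := by
  induction χ with
  | var n =>
      obtain ⟨h0, h1, h2⟩ := val_var n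
      rw [h0, h1, h2]
      exact ⟨Or.inr (Or.inr (Or.inr rfl)), Or.inl rfl,
        Or.inr (Or.inr (Or.inl ⟨rfl, rfl⟩)), Or.inr (Or.inl ⟨rfl, rfl⟩)⟩
  | neg φ ih =>
      obtain ⟨a1, a2, p1, p2⟩ := ih h
      exact ⟨a2, a1, p2, p1⟩
  | and φ ψ ihφ ihψ =>
      obtain ⟨a1, a2, p1, p2⟩ := ihφ h.1
      obtain ⟨b1, b2, r1, r2⟩ := ihψ h.2
      exact ⟨S_inf a1 b1, S_sup a2 b2, P_inf p1 r1, P_sup p2 r2⟩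
  | imp φ ψ ihφ ihψ =>
      obtain ⟨a1, a2, p1, p2⟩ := ihφ h.1
      obtain ⟨b1, b2, r1, r2⟩ := ihψ h.2
      exact ⟨S_gimp (Or.inl rfl) (Or.inr (Or.inr (Or.inr rfl))) b1,
        S_gcoimp (Or.inl rfl) (Or.inr (Or.inr (Or.inr rfl))) b2,
        P_gimp p1 r1, P_gcoimp r2 p2⟩
  | box φ ih => exact absurd h id
  | dia φ ih =>
      obtain ⟨a1, a2, p1, p2⟩ := ih h
      rw [val_dia_zero, val_dia_one, val_dia_two]
      refine ⟨?_, ?_, ?_, ?_⟩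
      · rw [sup_eq_left.mpr (P_le p1)]; exact P_fstB p1
      · rw [sup_eq_left.mpr (P_le p2)]; exact P_fstB p2
      · exact Or.inl ⟨rfl, rfl⟩
      · exact Or.inl ⟨rfl, rfl⟩

lemma val_dia_p : thmModel.val (.dia (.var 0)) 0 = (q23, q12) := by
  rw [val_dia_zero]
  obtain ⟨_, h1, h2⟩ := val_var 0
  rw [h1, h2]
  refine Prod.ext ?_ ?_ <;>
    [rw [sup_eq_left.mpr ?_]; rw [sup_eq_left.mpr ?_]] <;>
    norm_num [q23, q13, q12, q14, ← Subtype.coe_le_coe]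

lemma val_box_p : thmModel.val (.box (.var 0)) 0 = (q13, q14) := by
  rw [val_box_zero]
  obtain ⟨_, h1, h2⟩ := val_var 0
  rw [h1, h2]
  refine Prod.ext ?_ ?_ <;>
    [rw [inf_eq_right.mpr ?_]; rw [inf_eq_right.mpr ?_]] <;>
    norm_num [q23, q13, q12, q14, ← Subtype.coe_le_coe]

end BoxDiaAux

open BoxDiaAux in
theorem box_dia_not_interdefinable :
    (∀ χ : Fm, χ.diaFree → thmModel.val χ 0 ≠ thmModel.val (.dia (.var 0)) 0) ∧
    (∀ ψ : Fm, ψ.boxFree → thmModel.val ψ 0 ≠ thmModel.val (.box (.var 0)) 0) := by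
  constructor
  · intro χ h hEq
    obtain ⟨a1, -, -, -⟩ := inv_diaFree χ h
    rw [hEq, val_dia_p] at a1
    rcases a1 with h' | h' | h' | h' <;>
      · rw [Subtype.ext_iff] at h'
        norm_num [q23, q13, q14] at h'
  · intro χ h hEq
    obtain ⟨b1, -, -, -⟩ := inv_boxFree χ h
    rw [hEq, val_box_p] at b1
    rcases b1 with h' | h' | h' | h' <;>
      · rw [Subtype.ext_iff] at h'
        norm_num [q13, q12, q23] at h'
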